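/- arXiv:2502.11087 — 2 statements merged into one kernel-verified Lean document; each statement's English description precedes it below -/
import Mathlib

section
/- (Explicit radial eigenfunctions for the weighted problem) Let N ≥ 3 and define on ℝ^N the functions v₂(x) = (1+|x|²)^{−N/2}(1−|x|²) and v₃(x) = (1+|x|²)^{−N/2−1}(N|x|⁴ − 2(N+2)|x|² + N). Then for all x ∈ ℝ^N: −Δv₂(x) = N(N+2)(1+|x|²)^{−2}·v₂(x) and −Δv₃(x) = (N+2)(N+4)(1+|x|²)^{−2}·v₃(x). -/
open MeasureTheory

noncomputable section

abbrev Euc (N : ℕ) := EuclideanSpace ℝ (Fin N)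

variable (N : ℕ)

/-- The critical Sobolev exponent `2* = 2N/(N-2)`. -/
def twoStar : ℝ := 2 * N / ((N : ℝ) - 2)

/-- The open cone spanned by a set `D` on the unit sphere. -/
def cone (D : Set (Euc N)) : Set (Euc N) :=
  {x | ∃ s : ℝ, 0 < s ∧ ∃ q ∈ D, x = s • q}

/-- `∫_S |∇u|²`. -/
def gradNormSq (S : Set (Euc N)) (u : Euc N → ℝ) : ℝ :=
  ∫ x in S, ‖gradient u x‖ ^ 2

/-- The `L²` norm of the gradient, i.e. the `D^{1,2}` norm. -/
def gradNorm (S : Set (Euc N)) (u : Euc N → ℝ) : ℝ :=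
  Real.sqrt (gradNormSq N S u)

/-- The `L^p` norm on `S`. -/
def lpNorm (S : Set (Euc N)) (p : ℝ) (u : Euc N → ℝ) : ℝ :=
  (∫ x in S, |u x| ^ p) ^ (1 / p)

/-- Membership in `D^{1,2}(S)`: `u ∈ L^{2*}(S)` and `|∇u| ∈ L²(S)`. -/
def memD12 (S : Set (Euc N)) (u : Euc N → ℝ) : Prop :=
  MemLp u (ENNReal.ofReal (twoStar N)) (volume.restrict S) ∧
  MemLp (fun x => ‖gradient u x‖) 2 (volume.restrict S)

/-- The Sobolev quotient `Q_D(u) = ‖∇u‖₂ / ‖u‖_{2*}`. -/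
def sobQ (S : Set (Euc N)) (u : Euc N → ℝ) : ℝ :=
  gradNorm N S u / lpNorm N S (twoStar N) u

/-- The best Sobolev constant `S_D`. -/
def SD (S : Set (Euc N)) : ℝ :=
  sInf {r : ℝ | ∃ u, memD12 N S u ∧ u ≠ 0 ∧ r = sobQ N S u}

/-- A (global) minimizer of the Sobolev quotient. -/
def IsMinimizer (S : Set (Euc N)) (V : Euc N → ℝ) : Prop :=
  memD12 N S V ∧ V ≠ 0 ∧ sobQ N S V = SD N S

/-- A local minimizer of the Sobolev quotient (w.r.t. the `D^{1,2}` distance). -/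
def IsLocMin (S : Set (Euc N)) (V : Euc N → ℝ) : Prop :=
  memD12 N S V ∧ V ≠ 0 ∧
  ∃ δ : ℝ, 0 < δ ∧ ∀ u, memD12 N S u → u ≠ 0 →
    gradNorm N S (fun x => u x - V x) < δ → sobQ N S V ≤ sobQ N S u

/-- The rescaled function `V_s(x) = s · V(s^{2/(N-2)} x)`. -/
def rescale (V : Euc N → ℝ) (s : ℝ) : Euc N → ℝ :=
  fun x => s * V ((s ^ (2 / ((N : ℝ) - 2))) • x)

/-- The distance of `φ` from the manifold `M_V = {c · V_s}`. -/
def distM (S : Set (Euc N)) (V φ : Euc N → ℝ) : ℝ :=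
  ⨅ c : {c : ℝ // c ≠ 0}, ⨅ s : {s : ℝ // 0 < s},
    gradNorm N S (fun x => φ x - c.1 * rescale N V s.1 x)

/-- `W = ∂_s V_s |_{s=1}`, i.e. `W(x) = V(x) + (2/(N-2)) x·∇V(x)`. -/
def Wfun (V : Euc N → ℝ) : Euc N → ℝ :=
  fun x => V x + (2 / ((N : ℝ) - 2)) * (inner ℝ x (gradient V x) : ℝ)

/-- `∂_s V_s |_{s = s₀}`. -/
def dVs (V : Euc N → ℝ) (s : ℝ) : Euc N → ℝ :=
  fun x => V ((s ^ (2 / ((N : ℝ) - 2))) • x) +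
    (2 / ((N : ℝ) - 2)) * (s ^ (2 / ((N : ℝ) - 2))) *
      (inner ℝ x (gradient V ((s ^ (2 / ((N : ℝ) - 2))) • x)) : ℝ)

/-- The second variation `Q_V(η)` of the Sobolev quotient at a minimizer `V`. -/
def secondVar (S : Set (Euc N)) (V η : Euc N → ℝ) : ℝ :=
  (∫ x in S, ‖gradient η x‖ ^ 2)
  - 4 * sobQ N S V ^ twoStar N * (∫ x in S, V x ^ (twoStar N - 1) * η x)
      * (∫ x in S, (inner ℝ (gradient V x) (gradient η x) : ℝ))
  + sobQ N S V ^ twoStar N *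
      (-(twoStar N - 1) * (∫ x in S, V x ^ (twoStar N - 2) * η x ^ 2)
        + sobQ N S V ^ twoStar N * (twoStar N + 2) *
          (∫ x in S, V x ^ (twoStar N - 1) * η x) ^ 2)

/-- Nondegeneracy: the second variation vanishes only on `span{V, ∂_s V_s|_{s=1}}`. -/
def Nondeg (S : Set (Euc N)) (V : Euc N → ℝ) : Prop :=
  ∀ η : Euc N → ℝ, memD12 N S η → secondVar N S V η = 0 →
    ∃ a b : ℝ, η = fun x => a * V x + b * Wfun N V x

/-- The infimum `μ₃` of the Rayleigh quotient with weight `Vw^{2*-2}` over functions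
`D^{1,2}`-orthogonal to `a` and `b`. -/
def mu3 (S : Set (Euc N)) (Vw a b : Euc N → ℝ) : ℝ :=
  sInf {r : ℝ | ∃ ω : Euc N → ℝ, memD12 N S ω ∧ ω ≠ 0 ∧
    (∫ x in S, (inner ℝ (gradient ω x) (gradient a x) : ℝ)) = 0 ∧
    (∫ x in S, (inner ℝ (gradient ω x) (gradient b x) : ℝ)) = 0 ∧
    r = gradNormSq N S ω / (∫ x in S, Vw x ^ (twoStar N - 2) * ω x ^ 2)}

end

/-- The Euclidean Laplacian `Δf = ∑ᵢ ∂²f/∂xᵢ²`. -/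
noncomputable def lap {N : ℕ} (f : Euc N → ℝ) (x : Euc N) : ℝ :=
  ∑ i : Fin N,
    fderiv ℝ (fun y => fderiv ℝ f y (EuclideanSpace.single i (1 : ℝ))) x
      (EuclideanSpace.single i (1 : ℝ))


lemma hasDerivAt_one_add_rpow (p t : ℝ) (ht : 0 < 1 + t) :
    HasDerivAt (fun s : ℝ => (1 + s) ^ p) (p * (1 + t) ^ (p - 1)) t := by
  have h := (Real.hasDerivAt_rpow_const (x := 1 + t) (p := p) (Or.inl ht.ne')).comp t
      ((hasDerivAt_id t).const_add 1)
  simpa [Function.comp_def] using h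

lemma lap_radial {N : ℕ} (g g' g'' : ℝ → ℝ) (f : Euc N → ℝ)
    (hf : f = fun y => g (‖y‖ ^ 2))
    (h1 : ∀ t : ℝ, 0 ≤ t → HasDerivAt g (g' t) t)
    (h2 : ∀ t : ℝ, 0 ≤ t → HasDerivAt g' (g'' t) t)
    (x : Euc N) :
    lap f x = 4 * ‖x‖ ^ 2 * g'' (‖x‖ ^ 2) + 2 * N * g' (‖x‖ ^ 2) := by
  subst hf
  have hq : ∀ y : Euc N,
      HasFDerivAt (fun z : Euc N => ‖z‖ ^ 2)
        ((2 : ℕ) • (innerSL ℝ y)) y := fun y => (hasStrictFDerivAt_norm_sq y).hasFDerivAt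
  have hfd : ∀ y : Euc N,
      HasFDerivAt (fun z : Euc N => g (‖z‖ ^ 2))
        (g' (‖y‖ ^ 2) • ((2 : ℕ) • (innerSL ℝ y))) y := fun y =>
    (h1 _ (sq_nonneg _)).comp_hasFDerivAt y (hq y)
  have key : ∀ i : Fin N,
      (fun y : Euc N =>
        fderiv ℝ (fun z => g (‖z‖ ^ 2)) y (EuclideanSpace.single i (1 : ℝ)))
      = fun y => g' (‖y‖ ^ 2) * (2 * y i) := by
    intro i
    funext y
    rw [(hfd y).fderiv]
    simp [real_inner_comm, mul_comm, EuclideanSpace.inner_single_right]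
  have step : ∀ i : Fin N,
      fderiv ℝ (fun y : Euc N =>
        fderiv ℝ (fun z => g (‖z‖ ^ 2)) y (EuclideanSpace.single i (1 : ℝ))) x
        (EuclideanSpace.single i (1 : ℝ))
      = 2 * g' (‖x‖ ^ 2) + 4 * x i ^ 2 * g'' (‖x‖ ^ 2) := by
    intro i
    rw [key i]
    have hA : HasFDerivAt (fun y : Euc N => g' (‖y‖ ^ 2))
        (g'' (‖x‖ ^ 2) • ((2 : ℕ) • (innerSL ℝ x))) x :=
      (h2 _ (sq_nonneg _)).comp_hasFDerivAt x (hq x)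
    have hB : HasFDerivAt (fun y : Euc N => 2 * y i)
        ((2:ℝ) • (EuclideanSpace.proj (𝕜 := ℝ) i)) x :=
      (EuclideanSpace.proj (𝕜 := ℝ) i).hasFDerivAt.const_mul 2
    have hAB : HasFDerivAt (fun y : Euc N => g' (‖y‖ ^ 2) * (2 * y i))
        (g' (‖x‖ ^ 2) • ((2:ℝ) • (EuclideanSpace.proj (𝕜 := ℝ) i))
          + (2 * x i) • (g'' (‖x‖ ^ 2) • ((2 : ℕ) • (innerSL ℝ x)))) x := hA.mul hB
    rw [hAB.fderiv]
    simp [real_inner_comm, EuclideanSpace.inner_single_left, EuclideanSpace.inner_single_right]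
    ring
  rw [lap]
  rw [Finset.sum_congr rfl (fun i _ => step i)]
  rw [Finset.sum_add_distrib]
  have hns : ‖x‖ ^ 2 = ∑ i, x i ^ 2 := by
    rw [EuclideanSpace.norm_eq, Real.sq_sqrt (Finset.sum_nonneg fun _ _ => sq_nonneg _)]
    simp [sq_abs]
  rw [Finset.sum_const, Finset.card_univ, Fintype.card_fin, nsmul_eq_mul]
  have h4 : ∑ i, 4 * x i ^ 2 * g'' (‖x‖ ^ 2) = 4 * ‖x‖ ^ 2 * g'' (‖x‖ ^ 2) := by
    rw [hns, Finset.mul_sum, Finset.sum_mul]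
  rw [h4]; ring

lemma alg_v2 (n t p : ℝ) (hp : p = -n / 2) (ht : 0 < 1 + t) :
    -(4 * t * ((p * ((p - 1) * (1 + t) ^ (p - 1 - 1))) * (1 - t)
        + p * (1 + t) ^ (p - 1) * (-1) + p * (1 + t) ^ (p - 1) * (-1))
      + 2 * n * (p * (1 + t) ^ (p - 1) * (1 - t) + (1 + t) ^ p * (-1)))
    = n * (n + 2) * ((1 + t) ^ 2)⁻¹ * ((1 + t) ^ p * (1 - t)) := by
  have e1 : (1 + t) ^ (p - 1) = (1 + t) ^ (p - 2) * (1 + t) := by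
    rw [← Real.rpow_add_one ht.ne' (p - 2)]; congr 1; ring
  have e2 : (1 + t) ^ p = (1 + t) ^ (p - 2) * (1 + t) * (1 + t) := by
    rw [← Real.rpow_add_one ht.ne' (p - 2), ← Real.rpow_add_one ht.ne' (p - 2 + 1)]
    congr 1; ring
  rw [show p - 1 - 1 = p - 2 by ring, e1, e2]
  subst hp
  field_simp
  ring

lemma alg_v3 (n t p : ℝ) (hp : p = -n / 2 - 1) (ht : 0 < 1 + t) :
    -(4 * t * ((p * ((p - 1) * (1 + t) ^ (p - 1 - 1)))
          * (n * t ^ 2 - 2 * (n + 2) * t + n)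
        + p * (1 + t) ^ (p - 1) * (n * (2 * t) - 2 * (n + 2))
        + (p * (1 + t) ^ (p - 1) * (n * (2 * t) - 2 * (n + 2))
          + (1 + t) ^ p * (2 * n)))
      + 2 * n * (p * (1 + t) ^ (p - 1) * (n * t ^ 2 - 2 * (n + 2) * t + n)
        + (1 + t) ^ p * (n * (2 * t) - 2 * (n + 2))))
    = (n + 2) * (n + 4) * ((1 + t) ^ 2)⁻¹
        * ((1 + t) ^ p * (n * t ^ 2 - 2 * (n + 2) * t + n)) := by
  have e1 : (1 + t) ^ (p - 1) = (1 + t) ^ (p - 2) * (1 + t) := by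
    rw [← Real.rpow_add_one ht.ne' (p - 2)]; congr 1; ring
  have e2 : (1 + t) ^ p = (1 + t) ^ (p - 2) * (1 + t) * (1 + t) := by
    rw [← Real.rpow_add_one ht.ne' (p - 2), ← Real.rpow_add_one ht.ne' (p - 2 + 1)]
    congr 1; ring
  rw [show p - 1 - 1 = p - 2 by ring, e1, e2]
  subst hp
  field_simp
  ring

/-- explicit radial eigenfunctions, Appendix A: the functions
`v₂(x) = (1+|x|²)^{-N/2}(1-|x|²)` and `v₃(x) = (1+|x|²)^{-N/2-1}(N|x|⁴-2(N+2)|x|²+N)`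
satisfy `-Δv₂ = N(N+2)(1+|x|²)^{-2} v₂` and `-Δv₃ = (N+2)(N+4)(1+|x|²)^{-2} v₃`. -/
theorem explicit_radial_eigenfunctions
    (N : ℕ) (hN : 3 ≤ N)
    (v₂ v₃ : Euc N → ℝ)
    (hv₂ : v₂ = fun x => (1 + ‖x‖ ^ 2) ^ (-(N : ℝ) / 2) * (1 - ‖x‖ ^ 2))
    (hv₃ : v₃ = fun x => (1 + ‖x‖ ^ 2) ^ (-(N : ℝ) / 2 - 1) *
      ((N : ℝ) * ‖x‖ ^ 4 - 2 * ((N : ℝ) + 2) * ‖x‖ ^ 2 + (N : ℝ))) :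
    (∀ x : Euc N, -lap v₂ x =
      (N : ℝ) * ((N : ℝ) + 2) * ((1 + ‖x‖ ^ 2) ^ 2)⁻¹ * v₂ x) ∧
    (∀ x : Euc N, -lap v₃ x =
      ((N : ℝ) + 2) * ((N : ℝ) + 4) * ((1 + ‖x‖ ^ 2) ^ 2)⁻¹ * v₃ x) := by
  constructor
  · intro x
    have ht : (0:ℝ) < 1 + ‖x‖ ^ 2 := by positivity
    have hrad := lap_radial
      (fun t => (1 + t) ^ (-(N:ℝ)/2) * (1 - t))
      (fun t => -(N:ℝ)/2 * (1 + t) ^ (-(N:ℝ)/2 - 1) * (1 - t)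
        + (1 + t) ^ (-(N:ℝ)/2) * (-1))
      (fun t => (-(N:ℝ)/2 * ((-(N:ℝ)/2 - 1) * (1 + t) ^ (-(N:ℝ)/2 - 1 - 1))) * (1 - t)
        + -(N:ℝ)/2 * (1 + t) ^ (-(N:ℝ)/2 - 1) * (-1)
        + -(N:ℝ)/2 * (1 + t) ^ (-(N:ℝ)/2 - 1) * (-1))
      (fun x : Euc N => (1 + ‖x‖ ^ 2) ^ (-(N:ℝ)/2) * (1 - ‖x‖ ^ 2)) rfl
      (fun t ht0 => by
        have htt : (0:ℝ) < 1 + t := by linarith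
        exact ((hasDerivAt_one_add_rpow (-(N:ℝ)/2) t htt).mul
          ((hasDerivAt_id t).const_sub 1)).congr_deriv (by (try simp only [id_eq]); (try ring)))
      (fun t ht0 => by
        have htt : (0:ℝ) < 1 + t := by linarith
        exact ((((hasDerivAt_one_add_rpow (-(N:ℝ)/2 - 1) t htt).const_mul (-(N:ℝ)/2)).mul
          ((hasDerivAt_id t).const_sub 1)).add
          ((hasDerivAt_one_add_rpow (-(N:ℝ)/2) t htt).mul_const (-1))).congr_deriv
          (by (try simp only [id_eq]); (try ring)))
      x
    subst hv₂
    try beta_reduce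
    rw [hrad]
    exact alg_v2 (N:ℝ) (‖x‖ ^ 2) _ rfl ht
  · intro x
    have ht : (0:ℝ) < 1 + ‖x‖ ^ 2 := by positivity
    have hP : ∀ t : ℝ, HasDerivAt
        (fun s : ℝ => (N:ℝ) * s ^ 2 - 2 * ((N:ℝ) + 2) * s + (N:ℝ))
        ((N:ℝ) * (2 * t) - 2 * ((N:ℝ) + 2)) t := fun t => by
      have := (((hasDerivAt_pow 2 t).const_mul (N:ℝ)).sub
        ((hasDerivAt_id t).const_mul (2 * ((N:ℝ) + 2)))).add_const (N:ℝ)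
      exact this.congr_deriv (by (try simp only [id_eq]); push_cast; ring)
    have hrad := lap_radial
      (fun t => (1 + t) ^ (-(N:ℝ)/2 - 1)
        * ((N:ℝ) * t ^ 2 - 2 * ((N:ℝ) + 2) * t + (N:ℝ)))
      (fun t => (-(N:ℝ)/2 - 1) * (1 + t) ^ (-(N:ℝ)/2 - 1 - 1)
          * ((N:ℝ) * t ^ 2 - 2 * ((N:ℝ) + 2) * t + (N:ℝ))
        + (1 + t) ^ (-(N:ℝ)/2 - 1) * ((N:ℝ) * (2 * t) - 2 * ((N:ℝ) + 2)))
      (fun t => ((-(N:ℝ)/2 - 1) * ((-(N:ℝ)/2 - 1 - 1) * (1 + t) ^ (-(N:ℝ)/2 - 1 - 1 - 1)))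
          * ((N:ℝ) * t ^ 2 - 2 * ((N:ℝ) + 2) * t + (N:ℝ))
        + (-(N:ℝ)/2 - 1) * (1 + t) ^ (-(N:ℝ)/2 - 1 - 1)
          * ((N:ℝ) * (2 * t) - 2 * ((N:ℝ) + 2))
        + ((-(N:ℝ)/2 - 1) * (1 + t) ^ (-(N:ℝ)/2 - 1 - 1)
            * ((N:ℝ) * (2 * t) - 2 * ((N:ℝ) + 2))
          + (1 + t) ^ (-(N:ℝ)/2 - 1) * (2 * (N:ℝ))))
      (fun x : Euc N => (1 + ‖x‖ ^ 2) ^ (-(N:ℝ)/2 - 1)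
        * ((N:ℝ) * (‖x‖ ^ 2) ^ 2 - 2 * ((N:ℝ) + 2) * ‖x‖ ^ 2 + (N:ℝ))) rfl
      (fun t ht0 => by
        have htt : (0:ℝ) < 1 + t := by linarith
        exact ((hasDerivAt_one_add_rpow (-(N:ℝ)/2 - 1) t htt).mul (hP t)).congr_deriv
          (by ring))
      (fun t ht0 => by
        have htt : (0:ℝ) < 1 + t := by linarith
        have hQ : HasDerivAt (fun s : ℝ => (N:ℝ) * (2 * s) - 2 * ((N:ℝ) + 2))
            (2 * (N:ℝ)) t := by
          have := (((hasDerivAt_id t).const_mul 2).const_mul (N:ℝ)).sub_const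
            (2 * ((N:ℝ) + 2))
          exact this.congr_deriv (by (try simp only [id_eq]); (try ring))
        exact ((((hasDerivAt_one_add_rpow (-(N:ℝ)/2 - 1 - 1) t htt).const_mul
            ((-(N:ℝ)/2 - 1))).mul (hP t)).add
          ((hasDerivAt_one_add_rpow (-(N:ℝ)/2 - 1) t htt).mul hQ)).congr_deriv
          (by ring))
      x
    subst hv₃
    try beta_reduce
    have hfun : (fun x : Euc N => (1 + ‖x‖ ^ 2) ^ (-(N:ℝ)/2 - 1)
        * ((N:ℝ) * ‖x‖ ^ 4 - 2 * ((N:ℝ) + 2) * ‖x‖ ^ 2 + (N:ℝ)))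
        = (fun x : Euc N => (1 + ‖x‖ ^ 2) ^ (-(N:ℝ)/2 - 1)
        * ((N:ℝ) * (‖x‖ ^ 2) ^ 2 - 2 * ((N:ℝ) + 2) * ‖x‖ ^ 2 + (N:ℝ))) := by
      funext y; ring_nf
    rw [hfun, hrad, show ‖x‖ ^ 4 = (‖x‖ ^ 2) ^ 2 by ring]
    have halg := alg_v3 (N:ℝ) (‖x‖ ^ 2) (-(N:ℝ)/2 - 1) rfl ht
    rw [show -(N:ℝ)/2 - 1 - 1 - 1 = (-(N:ℝ)/2 - 1) - 1 - 1 by ring,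
      show -(N:ℝ)/2 - 1 - 1 = (-(N:ℝ)/2 - 1) - 1 by ring] at *
    exact halg
end

section
/- (Radial ODE for the first nonradial eigenvalue branch) Let N ≥ 3, β ≥ 0, and set λ = β² + (N−2)β. Define R : (0,∞) → ℝ by R(r) = (1+r²)^{1−N/2−β}·r^β. Then R solves, for every r > 0, the ordinary differential equation R''(r) + ((N−1)/r)·R'(r) − (λ/r²)·R(r) + (2β+N)(2β+N−2)·(1+r²)^{−2}·R(r) = 0. -/
open MeasureTheory

lemma hasDerivAt_P (a b r : ℝ) (hr : 0 < r) :
    HasDerivAt (fun r : ℝ => (1 + r ^ 2) ^ a * r ^ b)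
      (a * (1 + r ^ 2) ^ (a - 1) * (2 * r) * r ^ b
        + (1 + r ^ 2) ^ a * (b * r ^ (b - 1))) r := by
  have h0 : (0:ℝ) < 1 + r ^ 2 := by positivity
  have h1 : HasDerivAt (fun r : ℝ => 1 + r ^ 2) (2 * r) r := by
    simpa using ((hasDerivAt_pow 2 r).const_add 1)
  have h2 : HasDerivAt (fun r : ℝ => (1 + r ^ 2) ^ a)
      (a * (1 + r ^ 2) ^ (a - 1) * (2 * r)) r := by
    have := h1.rpow_const (p := a) (Or.inl h0.ne')
    convert this using 1
    ring
  have h3 : HasDerivAt (fun r : ℝ => r ^ b) (b * r ^ (b - 1)) r := by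
    simpa using Real.hasDerivAt_rpow_const (p := b) (Or.inl hr.ne')
  exact h2.mul h3


/-- radial ODE (2.22) for the first nonradial eigenvalue branch: with
`λ = β² + (N-2)β` and `R(r) = (1+r²)^{1-N/2-β} r^β`, for every `r > 0` one has
`R'' + (N-1)/r · R' - λ/r² · R + (2β+N)(2β+N-2)(1+r²)^{-2} R = 0`. -/
theorem radial_ODE_first_nonradial_branch
    (N : ℕ) (hN : 3 ≤ N) (β : ℝ) (hβ : 0 ≤ β)
    (R : ℝ → ℝ)
    (hR : R = fun r : ℝ => (1 + r ^ 2) ^ (1 - (N : ℝ) / 2 - β) * r ^ β) :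
    ∀ r : ℝ, 0 < r →
      deriv (deriv R) r + ((N : ℝ) - 1) / r * deriv R r
        - ((β ^ 2 + ((N : ℝ) - 2) * β) / r ^ 2) * R r
        + (2 * β + (N : ℝ)) * (2 * β + (N : ℝ) - 2) * ((1 + r ^ 2) ^ 2)⁻¹ * R r = 0 := by
  intro r hr
  set a : ℝ := 1 - (N : ℝ) / 2 - β with ha
  set D : ℝ → ℝ := fun r =>
    a * (1 + r ^ 2) ^ (a - 1) * (2 * r) * r ^ β + (1 + r ^ 2) ^ a * (β * r ^ (β - 1))
    with hD
  have hderiv : ∀ y : ℝ, 0 < y → deriv R y = D y := by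
    intro y hy
    rw [hR]
    exact (hasDerivAt_P a β y hy).deriv
  -- rewrite D as a sum of products of rpow's to differentiate again
  have hDeq : D = fun r : ℝ =>
      (2 * a) * ((1 + r ^ 2) ^ (a - 1) * (r * r ^ β))
        + β * ((1 + r ^ 2) ^ a * r ^ (β - 1)) := by
    funext x; simp only [hD]; ring
  have hD' : HasDerivAt D
      ((2 * a) * (((a - 1) * (1 + r ^ 2) ^ (a - 1 - 1) * (2 * r)) * (r * r ^ β)
          + (1 + r ^ 2) ^ (a - 1) * (1 * r ^ β + r * (β * r ^ (β - 1))))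
        + β * ((a * (1 + r ^ 2) ^ (a - 1) * (2 * r)) * r ^ (β - 1)
          + (1 + r ^ 2) ^ a * ((β - 1) * r ^ (β - 1 - 1)))) r := by
    rw [hDeq]
    have h0 : (0:ℝ) < 1 + r ^ 2 := by positivity
    have h1 : HasDerivAt (fun r : ℝ => 1 + r ^ 2) (2 * r) r := by
      simpa using ((hasDerivAt_pow 2 r).const_add 1)
    have h2 : HasDerivAt (fun r : ℝ => (1 + r ^ 2) ^ (a - 1))
        ((a - 1) * (1 + r ^ 2) ^ (a - 1 - 1) * (2 * r)) r := by
      have := h1.rpow_const (p := a - 1) (Or.inl h0.ne')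
      convert this using 1; ring
    have h3 : HasDerivAt (fun r : ℝ => r ^ β) (β * r ^ (β - 1)) r := by
      simpa using Real.hasDerivAt_rpow_const (p := β) (Or.inl hr.ne')
    have h4 : HasDerivAt (fun r : ℝ => r * r ^ β)
        (1 * r ^ β + r * (β * r ^ (β - 1))) r := (hasDerivAt_id r).mul h3
    exact ((h2.mul h4).const_mul (2 * a)).add
      ((hasDerivAt_P a (β - 1) r hr).const_mul β)
  have hDD : deriv (deriv R) r = deriv D r := by
    apply Filter.EventuallyEq.deriv_eq
    filter_upwards [eventually_gt_nhds hr] with y hy using hderiv y hy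
  rw [hDD, hD'.deriv, hderiv r hr, hR]
  simp only [hD]
  -- rewrite rpow differences as quotients
  have h0 : (0:ℝ) < 1 + r ^ 2 := by positivity
  have e1 : (1 + r ^ 2) ^ (a - 1) = (1 + r ^ 2) ^ a / (1 + r ^ 2) := by
    rw [Real.rpow_sub h0, Real.rpow_one]
  have e2 : (1 + r ^ 2) ^ (a - 1 - 1) = (1 + r ^ 2) ^ a / (1 + r ^ 2) ^ 2 := by
    rw [show a - 1 - 1 = a - (2:ℕ) by push_cast; ring, Real.rpow_sub h0,
      Real.rpow_natCast]
  have e3 : r ^ (β - 1) = r ^ β / r := by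
    rw [Real.rpow_sub hr, Real.rpow_one]
  have e4 : r ^ (β - 1 - 1) = r ^ β / r ^ 2 := by
    rw [show β - 1 - 1 = β - (2:ℕ) by push_cast; ring, Real.rpow_sub hr,
      Real.rpow_natCast]
  rw [e1, e2, e3, e4, ha]
  field_simp
  ring
end
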